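/- Let P be a forest on {1,…,n} in which every non-maximal element has at least two children. Then there exists a series-parallel ideal I ⊆ k[x_1,…,x_n] (up to relabeling of the variables) whose support poset is isomorphic to P; indeed the leaf ideal I_L(P) is such an ideal: it is series-parallel up to relabeling of variables, and C_i(I_L(P)) = { j : j ≤_P i } for every i, so i ↦ C_i(I_L(P)) is an isomorphism from P onto the support poset of I_L(P). -/

import Mathlib

open MvPolynomial

/-- The squarefree monomial with support `s`: `∏_{j ∈ s} x_j`. -/
noncomputable def sfMon (𝕜 : Type) [Field 𝕜] {σ : Type} (s : Finset σ) : MvPolynomial σ 𝕜 :=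
  ∏ j ∈ s, X j

/-- The supports of the minimal monomial generating set `G(I)` of a squarefree monomial
ideal `I`: supports `s` of squarefree monomials in `I` no proper (squarefree) divisor of which
lies in `I`. -/
def sqfreeMinGens {𝕜 : Type} [Field 𝕜] {σ : Type} (I : Ideal (MvPolynomial σ 𝕜)) :
    Set (Finset σ) :=
  { s | sfMon 𝕜 s ∈ I ∧ ∀ t : Finset σ, t ⊂ s → sfMon 𝕜 t ∉ I }

/-- `C_i(I) = ⋂ { supp m : m ∈ G(I), x_i ∣ m }`. -/
def suppC {𝕜 : Type} [Field 𝕜] {σ : Type} (I : Ideal (MvPolynomial σ 𝕜)) (i : σ) : Set σ :=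
  ⋂ s ∈ { s | s ∈ sqfreeMinGens I ∧ i ∈ s }, (s : Set σ)


open Classical

/-- A partial order `P` on `α` is a forest if, for every `p`, the set of elements strictly
below `p` is a chain. -/
def IsPForest {α : Type} (P : PartialOrder α) : Prop :=
  ∀ p q r : α, P.lt q p → P.lt r p → P.le q r ∨ P.le r q

/-- `l` is maximal (a leaf) for the partial order `P`. -/
def PIsMax {α : Type} (P : PartialOrder α) (l : α) : Prop := ∀ q, P.le l q → q = l

/-- `r` is minimal (a root) for the partial order `P`. -/
def PIsMin {α : Type} (P : PartialOrder α) (r : α) : Prop := ∀ q, P.le q r → q = r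

/-- `q` is a child of `p`: `q` covers `p` in `P`. -/
def PChild {α : Type} (P : PartialOrder α) (p q : α) : Prop :=
  P.lt p q ∧ ∀ r, P.lt p r → ¬ P.lt r q

/-- The leaf ideal of a forest `P` on `{1,…,n}`:
`I_L(P) = ⟨ ∏_{j ≤_P l} x_j : l a leaf of P ⟩`. -/
noncomputable def leafIdeal (𝕜 : Type) [Field 𝕜] {n : ℕ} (P : PartialOrder (Fin n)) :
    Ideal (MvPolynomial (Fin n) 𝕜) :=
  Ideal.span { f | ∃ l : Fin n, PIsMax P l ∧
    f = sfMon 𝕜 (Finset.univ.filter (fun j => P.le j l)) }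

/-- Series-parallel ideals, defined inductively: `⟨x_1⟩ ⊆ 𝕜[x_1]` is series-parallel, and if
`I₁ ⊆ 𝕜[x_1,…,x_n]` and `I₂ ⊆ 𝕜[x_{n+1},…,x_{n+m}]` are series-parallel then so are
`I₁' + I₂'` and `I₁' ∩ I₂'` in `𝕜[x_1,…,x_{n+m}]`, where `I₁'`, `I₂'` are the extensions
along the inclusions of polynomial rings (renaming along `Fin.castAdd` and `Fin.natAdd`). -/
inductive IsSeriesParallel (𝕜 : Type) [Field 𝕜] :
    (n : ℕ) → Ideal (MvPolynomial (Fin n) 𝕜) → Prop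
  | basic : IsSeriesParallel 𝕜 1 (Ideal.span {MvPolynomial.X 0})
  | sum {n m : ℕ} {I₁ : Ideal (MvPolynomial (Fin n) 𝕜)} {I₂ : Ideal (MvPolynomial (Fin m) 𝕜)} :
      IsSeriesParallel 𝕜 n I₁ → IsSeriesParallel 𝕜 m I₂ →
      IsSeriesParallel 𝕜 (n + m)
        (Ideal.map (MvPolynomial.rename (Fin.castAdd m)).toRingHom I₁ ⊔
         Ideal.map (MvPolynomial.rename (Fin.natAdd n)).toRingHom I₂)
  | inter {n m : ℕ} {I₁ : Ideal (MvPolynomial (Fin n) 𝕜)} {I₂ : Ideal (MvPolynomial (Fin m) 𝕜)} :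
      IsSeriesParallel 𝕜 n I₁ → IsSeriesParallel 𝕜 m I₂ →
      IsSeriesParallel 𝕜 (n + m)
        (Ideal.map (MvPolynomial.rename (Fin.castAdd m)).toRingHom I₁ ⊓
         Ideal.map (MvPolynomial.rename (Fin.natAdd n)).toRingHom I₂)

set_option maxHeartbeats 1000000

section MonLayer
open MvPolynomial
variable {𝕜 : Type} [Field 𝕜] {σ : Type} [DecidableEq σ]

noncomputable def expOf (s : Finset σ) : σ →₀ ℕ := ∑ j ∈ s, Finsupp.single j 1

lemma expOf_apply (s : Finset σ) (j : σ) : expOf s j = if j ∈ s then 1 else 0 := by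
  classical
  simp [expOf, Finset.sum_apply', Finsupp.single_apply, Finset.sum_ite_eq]

lemma sfMon_eq (s : Finset σ) : sfMon 𝕜 s = monomial (expOf s) 1 := by
  classical
  induction s using Finset.induction with
  | empty => simp [sfMon, expOf, monomial_zero']
  | insert a s h ih =>
    rw [sfMon, Finset.prod_insert h, ← sfMon, ih]
    rw [show expOf (insert _ _) = Finsupp.single _ 1 + expOf _ from Finset.sum_insert h]
    rw [X, monomial_mul, one_mul]

lemma expOf_le_iff (s : Finset σ) (d : σ →₀ ℕ) : expOf s ≤ d ↔ ∀ j ∈ s, d j ≠ 0 := by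
  rw [Finsupp.le_def]
  constructor
  · intro h j hj
    have := h j
    rw [expOf_apply, if_pos hj] at this
    omega
  · intro h j
    rw [expOf_apply]
    split
    · exact Nat.one_le_iff_ne_zero.2 (h j ‹_›)
    · exact Nat.zero_le _

lemma expOf_le_expOf_iff (s t : Finset σ) : expOf s ≤ expOf t ↔ s ⊆ t := by
  rw [expOf_le_iff]
  constructor
  · intro h j hj
    have := h j hj
    rw [expOf_apply] at this
    by_contra hc
    simp [hc] at this
  · intro h j hj
    rw [expOf_apply, if_pos (h hj)]
    simp

lemma support_sfMon (s : Finset σ) : (sfMon 𝕜 s).support = {expOf s} := by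
  classical
  rw [sfMon_eq, support_monomial]
  simp

lemma mem_span_sfMon_iff (T : Set (Finset σ)) (f : MvPolynomial σ 𝕜) :
    f ∈ Ideal.span (sfMon 𝕜 '' T) ↔ ∀ d ∈ f.support, ∃ s ∈ T, expOf s ≤ d := by
  have himg : sfMon 𝕜 '' T = (fun s => monomial s (1:𝕜)) '' (expOf '' T) := by
    rw [Set.image_image]; exact Set.image_congr fun s _ => sfMon_eq s
  rw [himg, mem_ideal_span_monomial_image]
  constructor
  · intro h d hd
    obtain ⟨si, ⟨s, hs, rfl⟩, hle⟩ := h d hd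
    exact ⟨s, hs, hle⟩
  · intro h d hd
    obtain ⟨s, hs, hle⟩ := h d hd
    exact ⟨expOf s, ⟨s, hs, rfl⟩, hle⟩

lemma sfMon_mem_span_iff (T : Set (Finset σ)) (t : Finset σ) :
    sfMon 𝕜 t ∈ Ideal.span (sfMon 𝕜 '' T) ↔ ∃ s ∈ T, s ⊆ t := by
  rw [mem_span_sfMon_iff]
  constructor
  · intro h
    obtain ⟨s, hs, hle⟩ := h (expOf t) (by rw [support_sfMon]; simp)
    exact ⟨s, hs, (expOf_le_expOf_iff _ _).1 hle⟩
  · rintro ⟨s, hs, hsub⟩ xi hxi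
    rw [support_sfMon] at hxi
    simp at hxi
    subst hxi
    exact ⟨s, hs, (expOf_le_expOf_iff _ _).2 hsub⟩

end MonLayer

section PosetUtil
variable {α : Type} (P : PartialOrder α)

lemma plt_iff (a b : α) : P.lt a b ↔ P.le a b ∧ ¬ P.le b a := P.lt_iff_le_not_ge a b

lemma plt_of_le_ne {a b : α} (h : P.le a b) (hne : a ≠ b) : P.lt a b := by
  rw [plt_iff]
  exact ⟨h, fun h' => hne (P.le_antisymm _ _ h h')⟩

lemma ple_of_lt {a b : α} (h : P.lt a b) : P.le a b := ((plt_iff P a b).1 h).1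

lemma pne_of_lt {a b : α} (h : P.lt a b) : a ≠ b := by
  rw [plt_iff] at h
  rintro rfl
  exact h.2 h.1

lemma plt_irrefl (a : α) : ¬ P.lt a a := fun h => pne_of_lt P h rfl

lemma plt_trans {a b c : α} (h : P.lt a b) (h' : P.lt b c) : P.lt a c := by
  rw [plt_iff] at *
  exact ⟨P.le_trans _ _ _ h.1 h'.1, fun hc => h.2 (P.le_trans _ _ _ h'.1 hc)⟩

lemma plt_of_le_of_lt {a b c : α} (h : P.le a b) (h' : P.lt b c) : P.lt a c := by
  rw [plt_iff] at *
  exact ⟨P.le_trans _ _ _ h h'.1, fun hc => h'.2 (P.le_trans _ _ _ hc h)⟩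

lemma plt_of_lt_of_le {a b c : α} (h : P.lt a b) (h' : P.le b c) : P.lt a c := by
  rw [plt_iff] at *
  exact ⟨P.le_trans _ _ _ h.1 h', fun hc => h.2 (P.le_trans _ _ _ h' hc)⟩

variable [DecidableEq α]

lemma pexists_max : ∀ (k : ℕ) (S : Finset α), S.card ≤ k → S.Nonempty →
    ∃ m ∈ S, ∀ y ∈ S, ¬ P.lt m y := by
  intro k
  induction k with
  | zero =>
    rintro S hcard ⟨x, hx⟩
    simp [Finset.card_eq_zero.1 (Nat.le_zero.1 hcard)] at hx
  | succ k ih =>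
    rintro S hcard ⟨x, hx⟩
    by_cases hx' : ∀ y ∈ S, ¬ P.lt x y
    · exact ⟨x, hx, hx'⟩
    · push_neg at hx'
      obtain ⟨y, hy, hxy⟩ := hx'
      classical
      set S' := S.filter (fun z => P.lt x z) with hS'
      have hy' : y ∈ S' := Finset.mem_filter.2 ⟨hy, hxy⟩
      have hss : S' ⊂ S := by
        refine Finset.ssubset_iff_of_subset (Finset.filter_subset _ _) |>.2 ⟨x, hx, ?_⟩
        simp [hS', plt_irrefl]
      have hcard' : S'.card ≤ k := by
        have := Finset.card_lt_card hss
        omega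
      obtain ⟨m, hm, hmax⟩ := ih S' hcard' ⟨y, hy'⟩
      refine ⟨m, (Finset.mem_filter.1 hm).1, fun z hz hmz => ?_⟩
      exact hmax z (Finset.mem_filter.2 ⟨hz, plt_trans P (Finset.mem_filter.1 hm).2 hmz⟩) hmz

lemma pexists_min : ∀ (k : ℕ) (S : Finset α), S.card ≤ k → S.Nonempty →
    ∃ m ∈ S, ∀ y ∈ S, ¬ P.lt y m := by
  intro k
  induction k with
  | zero =>
    rintro S hcard ⟨x, hx⟩
    simp [Finset.card_eq_zero.1 (Nat.le_zero.1 hcard)] at hx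
  | succ k ih =>
    rintro S hcard ⟨x, hx⟩
    by_cases hx' : ∀ y ∈ S, ¬ P.lt y x
    · exact ⟨x, hx, hx'⟩
    · push_neg at hx'
      obtain ⟨y, hy, hxy⟩ := hx'
      classical
      set S' := S.filter (fun z => P.lt z x) with hS'
      have hy' : y ∈ S' := Finset.mem_filter.2 ⟨hy, hxy⟩
      have hss : S' ⊂ S := by
        refine Finset.ssubset_iff_of_subset (Finset.filter_subset _ _) |>.2 ⟨x, hx, ?_⟩
        simp [hS', plt_irrefl]
      have hcard' : S'.card ≤ k := by
        have := Finset.card_lt_card hss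
        omega
      obtain ⟨m, hm, hmax⟩ := ih S' hcard' ⟨y, hy'⟩
      refine ⟨m, (Finset.mem_filter.1 hm).1, fun z hz hmz => ?_⟩
      exact hmax z (Finset.mem_filter.2 ⟨hz, plt_trans P hmz (Finset.mem_filter.1 hm).2⟩) hmz

end PosetUtil

section FinPoset
variable {n : ℕ} (P : PartialOrder (Fin n))

lemma exists_leaf_above (x : Fin n) : ∃ l, PIsMax P l ∧ P.le x l := by
  classical
  obtain ⟨m, hm, hmax⟩ := pexists_max P (Finset.univ.filter (fun y => P.le x y)).card
      (Finset.univ.filter (fun y => P.le x y)) le_rfl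
      ⟨x, Finset.mem_filter.2 ⟨Finset.mem_univ _, P.le_refl x⟩⟩
  have hxm : P.le x m := (Finset.mem_filter.1 hm).2
  refine ⟨m, fun q hq => ?_, hxm⟩
  by_contra hne
  exact hmax q (Finset.mem_filter.2 ⟨Finset.mem_univ _, P.le_trans _ _ _ hxm hq⟩)
    (plt_of_le_ne P hq (fun he => hne he.symm))

lemma exists_root_below (x : Fin n) : ∃ r, (∀ q, P.le q r → q = r) ∧ P.le r x := by
  classical
  obtain ⟨m, hm, hmin⟩ := pexists_min P (Finset.univ.filter (fun y => P.le y x)).card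
      (Finset.univ.filter (fun y => P.le y x)) le_rfl
      ⟨x, Finset.mem_filter.2 ⟨Finset.mem_univ _, P.le_refl x⟩⟩
  have hmx : P.le m x := (Finset.mem_filter.1 hm).2
  refine ⟨m, fun q hq => ?_, hmx⟩
  by_contra hne
  exact hmin q (Finset.mem_filter.2 ⟨Finset.mem_univ _, P.le_trans _ _ _ hq hmx⟩)
    (plt_of_le_ne P hq hne)

/-- key lemma: if j lies below every leaf above i, then j ≤ i. -/
lemma le_of_le_all_leaves (hforest : IsPForest P)
    (hchildren : ∀ p : Fin n, ¬ PIsMax P p →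
      ∃ q q' : Fin n, q ≠ q' ∧ PChild P p q ∧ PChild P p q')
    (i j : Fin n) (h : ∀ l, PIsMax P l → P.le i l → P.le j l) : P.le j i := by
  classical
  obtain ⟨l0, hl0, hil0⟩ := exists_leaf_above P i
  have hj0 : P.le j l0 := h l0 hl0 hil0
  by_cases hji : P.le j i
  · exact hji
  exfalso
  -- first show i < j
  have hij : P.lt i j := by
    rcases eq_or_ne i l0 with rfl | hne
    · exact absurd hj0 hji
    rcases eq_or_ne j l0 with rfl | hnej
    · exact plt_of_le_ne P hil0 hne
    · have := hforest l0 i j (plt_of_le_ne P hil0 hne) (plt_of_le_ne P hj0 hnej)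
      rcases this with h' | h'
      · exact plt_of_le_ne P h' (fun he => hji (he ▸ P.le_refl i))
      · exact absurd h' hji
  -- i is not maximal
  have hnm : ¬ PIsMax P i := fun hm => pne_of_lt P hij (hm j (ple_of_lt P hij)).symm
  -- find a child m of i with m ≤ j
  have hexm : ∃ m, PChild P i m ∧ P.le m j := by
    set S : Finset (Fin n) := Finset.univ.filter (fun r => P.lt i r ∧ P.le r j) with hS
    obtain ⟨m, hm, hmin⟩ := pexists_min P S.card S le_rfl
      ⟨j, Finset.mem_filter.2 ⟨Finset.mem_univ _, hij, P.le_refl j⟩⟩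
    obtain ⟨-, him, hmj⟩ := Finset.mem_filter.1 hm
    refine ⟨m, ⟨him, fun r hir hrm => ?_⟩, hmj⟩
    exact hmin r (Finset.mem_filter.2 ⟨Finset.mem_univ _, hir,
      P.le_trans _ _ _ (ple_of_lt P hrm) hmj⟩) hrm
  obtain ⟨m, hmchild, hmj⟩ := hexm
  obtain ⟨q, q', hqq', hq, hq'⟩ := hchildren i hnm
  -- pick child q1 ≠ m
  have hexq1 : ∃ q1, PChild P i q1 ∧ q1 ≠ m := by
    rcases eq_or_ne q m with rfl | hne
    · exact ⟨q', hq', fun he => hqq' he.symm⟩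
    · exact ⟨q, hq, hne⟩
  obtain ⟨q1, hq1child, hq1ne⟩ := hexq1
  obtain ⟨l1, hl1, hq1l1⟩ := exists_leaf_above P q1
  have hil1 : P.le i l1 := P.le_trans _ _ _ (ple_of_lt P hq1child.1) hq1l1
  have hjl1 : P.le j l1 := h l1 hl1 hil1
  have hml1 : P.le m l1 := P.le_trans _ _ _ hmj hjl1
  -- m, q1 both ≤ l1, distinct children of i: contradiction
  have hcomp : P.le m q1 ∨ P.le q1 m := by
    rcases eq_or_ne m l1 with rfl | hml1'
    · exact .inr hq1l1
    rcases eq_or_ne q1 l1 with rfl | hq1l1'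
    · exact .inl hml1
    · exact hforest l1 m q1 (plt_of_le_ne P hml1 hml1') (plt_of_le_ne P hq1l1 hq1l1')
  rcases hcomp with h' | h'
  · exact hq1child.2 m hmchild.1 (plt_of_le_ne P h' (fun he => hq1ne he.symm))
  · exact hmchild.2 q1 hq1child.1 (plt_of_le_ne P h' hq1ne)

end FinPoset

-- suppC layer
section SuppCLayer
open MvPolynomial

section SuppCLayer2
variable (𝕜 : Type) [Field 𝕜] {n : ℕ} (P : PartialOrder (Fin n))

noncomputable def Dl (l : Fin n) : Finset (Fin n) := Finset.univ.filter (fun j => P.le j l)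

lemma mem_Dl {l j : Fin n} : j ∈ Dl P l ↔ P.le j l := by simp [Dl]

lemma leafIdeal_eq_span_image :
    leafIdeal 𝕜 P = Ideal.span (sfMon 𝕜 '' {s | ∃ l, PIsMax P l ∧ s = Dl P l}) := by
  unfold leafIdeal Dl
  congr 1
  ext f
  constructor
  · rintro ⟨l, hl, rfl⟩
    exact ⟨_, ⟨l, hl, rfl⟩, rfl⟩
  · rintro ⟨s, ⟨l, hl, rfl⟩, rfl⟩
    exact ⟨l, hl, rfl⟩

lemma sfMon_mem_leafIdeal_iff (t : Finset (Fin n)) :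
    sfMon 𝕜 t ∈ leafIdeal 𝕜 P ↔ ∃ l, PIsMax P l ∧ Dl P l ⊆ t := by
  rw [leafIdeal_eq_span_image, sfMon_mem_span_iff]
  constructor
  · rintro ⟨s, ⟨l, hl, rfl⟩, hsub⟩
    exact ⟨l, hl, hsub⟩
  · rintro ⟨l, hl, hsub⟩
    exact ⟨Dl P l, ⟨l, hl, rfl⟩, hsub⟩

lemma sqfreeMinGens_leafIdeal :
    sqfreeMinGens (leafIdeal 𝕜 P) = {s | ∃ l, PIsMax P l ∧ s = Dl P l} := by
  ext s
  constructor
  · rintro ⟨hmem, hmin⟩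
    obtain ⟨l, hl, hsub⟩ := (sfMon_mem_leafIdeal_iff 𝕜 P s).1 hmem
    refine ⟨l, hl, ?_⟩
    by_contra hne
    exact hmin (Dl P l) (lt_of_le_of_ne hsub (fun h => hne h.symm))
      ((sfMon_mem_leafIdeal_iff 𝕜 P _).2 ⟨l, hl, subset_rfl⟩)
  · rintro ⟨l, hl, rfl⟩
    refine ⟨(sfMon_mem_leafIdeal_iff 𝕜 P _).2 ⟨l, hl, subset_rfl⟩, ?_⟩
    intro t hts hmem
    obtain ⟨l', hl', hsub⟩ := (sfMon_mem_leafIdeal_iff 𝕜 P t).1 hmem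
    have hl'l : P.le l' l := (mem_Dl P).1 (hts.subset (hsub ((mem_Dl P).2 (P.le_refl l'))))
    have : l = l' := hl' l hl'l
    subst this
    have : Dl P l ⊆ t := hsub
    exact hts.not_subset this

lemma suppC_leafIdeal (hforest : IsPForest P)
    (hchildren : ∀ p : Fin n, ¬ PIsMax P p →
      ∃ q q' : Fin n, q ≠ q' ∧ PChild P p q ∧ PChild P p q')
    (i : Fin n) : suppC (leafIdeal 𝕜 P) i = { j : Fin n | P.le j i } := by
  ext j
  simp only [suppC, Set.mem_iInter, Set.mem_setOf_eq, sqfreeMinGens_leafIdeal 𝕜 P,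
    Finset.mem_coe]
  constructor
  · intro h
    refine le_of_le_all_leaves P hforest hchildren i j (fun l hl hil => ?_)
    exact (mem_Dl P).1 (h (Dl P l) ⟨⟨l, hl, rfl⟩, (mem_Dl P).2 hil⟩)
  · rintro hji s ⟨⟨l, hl, rfl⟩, hi⟩
    exact (mem_Dl P).2 (P.le_trans _ _ _ hji ((mem_Dl P).1 hi))

end SuppCLayer2
end SuppCLayer

-- SP layer
section SPLayer
open MvPolynomial
-- ============ pullback posets ============
def pullback {n m : ℕ} (P : PartialOrder (Fin n)) (g : Fin m → Fin n)
    (hg : Function.Injective g) : PartialOrder (Fin m) where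
  le i j := P.le (g i) (g j)
  lt i j := P.lt (g i) (g j)
  le_refl i := P.le_refl _
  le_trans a b c h h' := P.le_trans _ _ _ h h'
  lt_iff_le_not_ge a b := P.lt_iff_le_not_ge _ _
  le_antisymm a b h h' := hg (P.le_antisymm _ _ h h')

section Transfer
variable {n m : ℕ} (P : PartialOrder (Fin n)) (g : Fin m → Fin n) (hg : Function.Injective g)

lemma pullback_le (i j : Fin m) : (pullback P g hg).le i j ↔ P.le (g i) (g j) := Iff.rfl
lemma pullback_lt (i j : Fin m) : (pullback P g hg).lt i j ↔ P.lt (g i) (g j) := Iff.rfl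

lemma pullback_forest (h : IsPForest P) : IsPForest (pullback P g hg) := by
  intro p q r hq hr
  exact h (g p) (g q) (g r) hq hr

lemma pullback_max (hup : ∀ u v, (∃ i, g i = u) → P.le u v → ∃ j, g j = v) (l : Fin m) :
    PIsMax (pullback P g hg) l ↔ PIsMax P (g l) := by
  constructor
  · intro hmax q hq
    obtain ⟨j, rfl⟩ := hup (g l) q ⟨l, rfl⟩ hq
    exact congrArg g (hmax j hq)
  · intro hmax q hq
    exact hg (hmax (g q) hq)

lemma pullback_children (hup : ∀ u v, (∃ i, g i = u) → P.le u v → ∃ j, g j = v)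
    (hc : ∀ p : Fin n, ¬ PIsMax P p →
      ∃ q q' : Fin n, q ≠ q' ∧ PChild P p q ∧ PChild P p q') :
    ∀ p : Fin m, ¬ PIsMax (pullback P g hg) p →
      ∃ q q' : Fin m, q ≠ q' ∧ PChild (pullback P g hg) p q ∧ PChild (pullback P g hg) p q' := by
  intro p hp
  have hp' : ¬ PIsMax P (g p) := fun h => hp ((pullback_max P g hg hup p).2 h)
  obtain ⟨q, q', hne, hq, hq'⟩ := hc (g p) hp'
  obtain ⟨q1, rfl⟩ := hup (g p) q ⟨p, rfl⟩ (ple_of_lt P hq.1)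
  obtain ⟨q1', rfl⟩ := hup (g p) q' ⟨p, rfl⟩ (ple_of_lt P hq'.1)
  refine ⟨q1, q1', fun h => hne (congrArg g h), ⟨hq.1, fun r hr => hq.2 (g r) hr⟩,
    ⟨hq'.1, fun r hr => hq'.2 (g r) hr⟩⟩

lemma Dl_pullback (hdown : ∀ u v, (∃ i, g i = u) → P.le v u → ∃ j, g j = v) (l : Fin m) :
    Dl P (g l) = (Dl (pullback P g hg) l).image g := by
  ext j
  constructor
  · intro hj
    have hj' : P.le j (g l) := (mem_Dl P).1 hj
    obtain ⟨j1, rfl⟩ := hdown (g l) j ⟨l, rfl⟩ hj'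
    exact Finset.mem_image.2 ⟨j1, (mem_Dl (pullback P g hg)).2 hj', rfl⟩
  · intro hj
    obtain ⟨j1, hj1, rfl⟩ := Finset.mem_image.1 hj
    exact (mem_Dl P).2 ((mem_Dl (pullback P g hg)).1 hj1)

end Transfer

-- ============ rename and spans ============
section Rename
variable (𝕜 : Type) [Field 𝕜]

lemma rename_sfMon {σ τ : Type} [DecidableEq τ] (f : σ → τ) (hf : Function.Injective f) (s : Finset σ) :
    rename f (sfMon 𝕜 s) = sfMon 𝕜 (s.image f) := by
  classical
  rw [sfMon, map_prod, sfMon, Finset.prod_image (fun a _ b _ h => hf h)]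
  simp [rename_X]

lemma map_rename_span_sfMon {σ τ : Type} [DecidableEq τ] (f : σ → τ) (hf : Function.Injective f)
    (T : Set (Finset σ)) :
    Ideal.map (rename (R := 𝕜) f).toRingHom (Ideal.span (sfMon 𝕜 '' T)) =
      Ideal.span (sfMon 𝕜 '' ((fun s => s.image f) '' T)) := by
  rw [Ideal.map_span, Set.image_image, Set.image_image]
  congr 1
  ext p
  constructor
  · rintro ⟨s, hs, rfl⟩
    exact ⟨s, hs, (rename_sfMon 𝕜 f hf s).symm⟩
  · rintro ⟨s, hs, rfl⟩
    exact ⟨s, hs, rename_sfMon 𝕜 f hf s⟩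

lemma map_rename_rename {σ τ υ : Type} (f : σ → τ) (g : τ → υ)
    (I : Ideal (MvPolynomial σ 𝕜)) :
    Ideal.map (rename (R := 𝕜) g).toRingHom (Ideal.map (rename (R := 𝕜) f).toRingHom I) =
      Ideal.map (rename (R := 𝕜) (g ∘ f)).toRingHom I := by
  rw [Ideal.map_map]
  congr 1
  exact RingHom.ext fun p => rename_rename f g p

lemma map_rename_id {σ : Type} (I : Ideal (MvPolynomial σ 𝕜)) :
    Ideal.map (rename (R := 𝕜) (id : σ → σ)).toRingHom I = I := by
  have : (rename (R := 𝕜) (id : σ → σ)).toRingHom = RingHom.id _ :=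
    RingHom.ext fun p => DFunLike.congr_fun rename_id p
  rw [this, Ideal.map_id]

end Rename

-- ============ leafIdeal under an equivalence ============
lemma leafIdeal_map_equiv (𝕜 : Type) [Field 𝕜] {n m : ℕ} (e : Fin n ≃ Fin m)
    (P : PartialOrder (Fin n)) :
    Ideal.map (rename (R := 𝕜) ⇑e).toRingHom (leafIdeal 𝕜 P) =
      leafIdeal 𝕜 (pullback P ⇑e.symm e.symm.injective) := by
  set Q := pullback P ⇑e.symm e.symm.injective with hQ
  have hmax : ∀ l : Fin n, PIsMax P l ↔ PIsMax Q (e l) := by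
    intro l
    constructor
    · intro h q hq
      have hq' : P.le l (e.symm q) := by
        have := (pullback_le P ⇑e.symm e.symm.injective (e l) q).1 hq
        rwa [Equiv.symm_apply_apply] at this
      have h2 := h _ hq'
      rw [← h2, Equiv.apply_symm_apply]
    · intro h q hq
      have hq' : Q.le (e l) (e q) := by
        rw [pullback_le, Equiv.symm_apply_apply, Equiv.symm_apply_apply]
        exact hq
      exact e.injective (h (e q) hq')
  have hDl : ∀ l : Fin n, (Dl P l).image ⇑e = Dl Q (e l) := by
    intro l
    ext j
    rw [mem_Dl]
    have : Q.le j (e l) ↔ P.le (e.symm j) l := by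
      rw [pullback_le, Equiv.symm_apply_apply]
    rw [this]
    constructor
    · intro h
      obtain ⟨j1, hj1, rfl⟩ := Finset.mem_image.1 h
      rw [Equiv.symm_apply_apply]
      exact (mem_Dl P).1 hj1
    · intro h
      exact Finset.mem_image.2 ⟨e.symm j, (mem_Dl P).2 h, by rw [Equiv.apply_symm_apply]⟩
  rw [leafIdeal_eq_span_image, leafIdeal_eq_span_image,
    map_rename_span_sfMon 𝕜 ⇑e e.injective]
  have hsets : ((fun s => Finset.image ⇑e s) '' {s | ∃ l, PIsMax P l ∧ s = Dl P l}) =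
      {s | ∃ l, PIsMax Q l ∧ s = Dl Q l} := by
    ext s
    constructor
    · rintro ⟨t, ⟨l, hl, rfl⟩, rfl⟩
      exact ⟨e l, (hmax l).1 hl, by simpa using hDl l⟩
    · rintro ⟨l', hl', rfl⟩
      refine ⟨Dl P (e.symm l'), ⟨e.symm l', ?_, rfl⟩, ?_⟩
      · have h2 := (hmax (e.symm l')).2
        rw [Equiv.apply_symm_apply] at h2
        exact h2 hl'
      · show Finset.image ⇑e (Dl P (e.symm l')) = Dl Q l'
        rw [hDl (e.symm l'), Equiv.apply_symm_apply]
  rw [hsets]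

-- ============ block helpers ============
lemma natAdd_inj {a b : ℕ} : Function.Injective (Fin.natAdd a : Fin b → Fin (a+b)) := by
  intro i j h
  have := congrArg Fin.val h
  simp only [Fin.coe_natAdd] at this
  exact Fin.ext (by omega)

lemma castAdd_inj {a b : ℕ} : Function.Injective (Fin.castAdd b : Fin a → Fin (a+b)) :=
  Fin.castAdd_injective a b

lemma fin_add_cases {a b : ℕ} (x : Fin (a+b)) :
    (∃ i : Fin a, x = Fin.castAdd b i) ∨ (∃ j : Fin b, x = Fin.natAdd a j) := by
  by_cases h : (x : ℕ) < a
  · exact Or.inl ⟨⟨x, h⟩, Fin.ext rfl⟩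
  · refine Or.inr ⟨⟨(x : ℕ) - a, by omega⟩, Fin.ext ?_⟩
    simp only [Fin.coe_natAdd]
    omega

lemma castAdd_range_iff {a b : ℕ} (x : Fin (a+b)) :
    (∃ i : Fin a, Fin.castAdd b i = x) ↔ (x : ℕ) < a := by
  constructor
  · rintro ⟨i, rfl⟩
    exact i.isLt
  · intro h
    exact ⟨⟨x, h⟩, Fin.ext rfl⟩

lemma natAdd_range_iff {a b : ℕ} (x : Fin (a+b)) :
    (∃ j : Fin b, Fin.natAdd a j = x) ↔ ¬ (x : ℕ) < a := by
  constructor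
  · rintro ⟨j, rfl⟩
    simp only [Fin.coe_natAdd]
    omega
  · intro h
    exact ⟨⟨(x : ℕ) - a, by omega⟩, Fin.ext (by simp only [Fin.coe_natAdd]; omega)⟩

-- ============ L2: disjoint block sum ============
lemma leafIdeal_block_sum (𝕜 : Type) [Field 𝕜] {a b : ℕ} (Q : PartialOrder (Fin (a+b)))
    (hsep : ∀ x y, Q.le x y → ((x : ℕ) < a ↔ (y : ℕ) < a)) :
    leafIdeal 𝕜 Q =
      Ideal.map (rename (R := 𝕜) (Fin.castAdd b)).toRingHom
        (leafIdeal 𝕜 (pullback Q (Fin.castAdd b) castAdd_inj)) ⊔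
      Ideal.map (rename (R := 𝕜) (Fin.natAdd a)).toRingHom
        (leafIdeal 𝕜 (pullback Q (Fin.natAdd a) natAdd_inj)) := by
  set P1 := pullback Q (Fin.castAdd b) castAdd_inj with hP1
  set P2 := pullback Q (Fin.natAdd a) natAdd_inj with hP2
  have hupL : ∀ u v, (∃ i, Fin.castAdd b i = u) → Q.le u v → ∃ j, Fin.castAdd b j = v := by
    intro u v hu huv
    exact (castAdd_range_iff v).2 ((hsep u v huv).1 ((castAdd_range_iff u).1 hu))
  have hdownL : ∀ u v, (∃ i, Fin.castAdd b i = u) → Q.le v u → ∃ j, Fin.castAdd b j = v := by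
    intro u v hu hvu
    exact (castAdd_range_iff v).2 ((hsep v u hvu).2 ((castAdd_range_iff u).1 hu))
  have hupR : ∀ u v, (∃ i, Fin.natAdd a i = u) → Q.le u v → ∃ j, Fin.natAdd a j = v := by
    intro u v hu huv
    exact (natAdd_range_iff v).2 (fun h => (natAdd_range_iff u).1 hu ((hsep u v huv).2 h))
  have hdownR : ∀ u v, (∃ i, Fin.natAdd a i = u) → Q.le v u → ∃ j, Fin.natAdd a j = v := by
    intro u v hu hvu
    exact (natAdd_range_iff v).2 (fun h => (natAdd_range_iff u).1 hu ((hsep v u hvu).1 h))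
  rw [leafIdeal_eq_span_image, leafIdeal_eq_span_image, leafIdeal_eq_span_image,
    map_rename_span_sfMon 𝕜 _ castAdd_inj, map_rename_span_sfMon 𝕜 _ natAdd_inj,
    ← Ideal.span_union, ← Set.image_union]
  have hsets : {s | ∃ l, PIsMax Q l ∧ s = Dl Q l} =
      ((fun s => Finset.image (Fin.castAdd b) s) '' {s | ∃ l, PIsMax P1 l ∧ s = Dl P1 l}) ∪
      ((fun s => Finset.image (Fin.natAdd a) s) '' {s | ∃ l, PIsMax P2 l ∧ s = Dl P2 l}) := by
    ext s
    constructor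
    · rintro ⟨l, hl, rfl⟩
      rcases fin_add_cases l with ⟨l1, rfl⟩ | ⟨l2, rfl⟩
      · exact Or.inl ⟨Dl P1 l1, ⟨l1, (pullback_max Q _ castAdd_inj hupL l1).2 hl, rfl⟩,
          (Dl_pullback Q _ castAdd_inj hdownL l1).symm⟩
      · exact Or.inr ⟨Dl P2 l2, ⟨l2, (pullback_max Q _ natAdd_inj hupR l2).2 hl, rfl⟩,
          (Dl_pullback Q _ natAdd_inj hdownR l2).symm⟩
    · rintro (⟨t, ⟨l1, hl1, rfl⟩, rfl⟩ | ⟨t, ⟨l2, hl2, rfl⟩, rfl⟩)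
      · exact ⟨Fin.castAdd b l1, (pullback_max Q _ castAdd_inj hupL l1).1 hl1,
          by simpa using (Dl_pullback Q _ castAdd_inj hdownL l1).symm⟩
      · exact ⟨Fin.natAdd a l2, (pullback_max Q _ natAdd_inj hupR l2).1 hl2,
          by simpa using (Dl_pullback Q _ natAdd_inj hdownR l2).symm⟩
  rw [hsets]

-- ============ L3: cone ============
lemma leafIdeal_block_cone (𝕜 : Type) [Field 𝕜] {b : ℕ} (hb : 1 ≤ b)
    (Q : PartialOrder (Fin (1+b)))
    (hroot : ∀ x, Q.le (Fin.castAdd b 0) x) :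
    leafIdeal 𝕜 Q =
      Ideal.map (rename (R := 𝕜) (Fin.castAdd b)).toRingHom
        (Ideal.span {X (0 : Fin 1)}) ⊓
      Ideal.map (rename (R := 𝕜) (Fin.natAdd 1)).toRingHom
        (leafIdeal 𝕜 (pullback Q (Fin.natAdd 1) natAdd_inj)) := by
  classical
  set r : Fin (1+b) := Fin.castAdd b 0 with hr
  set P2 := pullback Q (Fin.natAdd 1) natAdd_inj with hP2
  have hrne : ∀ j : Fin b, Fin.natAdd 1 j ≠ r := by
    intro j h
    have := congrArg Fin.val h
    simp [hr, Fin.coe_natAdd] at this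
  have hcast0 : ∀ i : Fin 1, Fin.castAdd b i = r := by
    intro i
    have : i = 0 := Subsingleton.elim _ _
    rw [this]
  have hupR : ∀ u v, (∃ i, Fin.natAdd 1 i = u) → Q.le u v → ∃ j, Fin.natAdd 1 j = v := by
    intro u v hu huv
    rcases fin_add_cases v with ⟨i, rfl⟩ | ⟨j, rfl⟩
    · exfalso
      obtain ⟨i0, rfl⟩ := hu
      have h1 : Fin.castAdd b i = r := hcast0 i
      have h2 : Q.le (Fin.natAdd 1 i0) r := h1 ▸ huv
      have h3 : Q.le r (Fin.natAdd 1 i0) := hroot _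
      exact hrne i0 (Q.le_antisymm _ _ h2 h3)
    · exact ⟨j, rfl⟩
  have hDl2 : ∀ l2 : Fin b, Dl Q (Fin.natAdd 1 l2) =
      insert r ((Dl P2 l2).image (Fin.natAdd 1)) := by
    intro l2
    ext j
    rw [mem_Dl, Finset.mem_insert, Finset.mem_image]
    constructor
    · intro hj
      rcases fin_add_cases j with ⟨i, rfl⟩ | ⟨j2, rfl⟩
      · exact Or.inl (hcast0 i)
      · exact Or.inr ⟨j2, (mem_Dl P2).2 hj, rfl⟩
    · rintro (rfl | ⟨j2, hj2, rfl⟩)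
      · exact hroot _
      · exact (mem_Dl P2).1 hj2
  have hmax2 := pullback_max Q (Fin.natAdd 1) natAdd_inj hupR
  have hleaves : {s | ∃ l, PIsMax Q l ∧ s = Dl Q l} =
      (fun s => insert r s) '' ((fun s => Finset.image (Fin.natAdd 1) s) ''
        {s | ∃ l2, PIsMax P2 l2 ∧ s = Dl P2 l2}) := by
    rw [Set.image_image]
    ext s
    constructor
    · rintro ⟨l, hl, rfl⟩
      have hlnat : ∃ l2, Fin.natAdd 1 l2 = l := by
        rcases fin_add_cases l with ⟨i, rfl⟩ | ⟨l2, rfl⟩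
        · exfalso
          have hx0 : Q.le (Fin.castAdd b i) (Fin.natAdd 1 ⟨0, hb⟩) := by
            rw [hcast0 i]
            exact hroot _
          have := hl _ hx0
          exact hrne ⟨0, hb⟩ (this.trans (hcast0 i))
        · exact ⟨l2, rfl⟩
      obtain ⟨l2, rfl⟩ := hlnat
      exact ⟨Dl P2 l2, ⟨l2, (hmax2 l2).2 hl, rfl⟩, (hDl2 l2).symm⟩
    · rintro ⟨t, ⟨l2, hl2, rfl⟩, rfl⟩
      exact ⟨Fin.natAdd 1 l2, (hmax2 l2).1 hl2, by simpa using (hDl2 l2).symm⟩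
  have h1 : Ideal.map (rename (R := 𝕜) (Fin.castAdd b)).toRingHom
      (Ideal.span {X (0 : Fin 1)}) =
      Ideal.span (sfMon 𝕜 '' {({r} : Finset (Fin (1+b)))}) := by
    rw [Ideal.map_span, Set.image_singleton, Set.image_singleton]
    congr 1
    simp only [AlgHom.toRingHom_eq_coe, RingHom.coe_coe, rename_X, sfMon,
      Finset.prod_singleton]
    rfl
  rw [leafIdeal_eq_span_image, leafIdeal_eq_span_image, h1,
    map_rename_span_sfMon 𝕜 _ natAdd_inj, hleaves]
  ext f
  rw [Submodule.mem_inf, mem_span_sfMon_iff, mem_span_sfMon_iff, mem_span_sfMon_iff]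
  constructor
  · intro h
    constructor
    · intro d hd
      obtain ⟨s, ⟨s2, hs2, rfl⟩, hle⟩ := h d hd
      refine ⟨{r}, rfl, (expOf_le_iff _ _).2 ?_⟩
      intro j hj
      rw [Finset.mem_singleton] at hj
      subst hj
      exact (expOf_le_iff _ _).1 hle r (Finset.mem_insert_self _ _)
    · intro d hd
      obtain ⟨s, ⟨s2, hs2, rfl⟩, hle⟩ := h d hd
      refine ⟨s2, hs2, (expOf_le_iff _ _).2 ?_⟩
      intro j hj
      exact (expOf_le_iff _ _).1 hle j (Finset.mem_insert_of_mem hj)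
  · rintro ⟨h1, h2⟩ d hd
    obtain ⟨s, hsmem, hle⟩ := h2 d hd
    obtain ⟨sr, hsr, hler⟩ := h1 d hd
    rw [Set.mem_singleton_iff] at hsr
    subst hsr
    refine ⟨insert r s, ⟨s, hsmem, rfl⟩, (expOf_le_iff _ _).2 ?_⟩
    intro j hj
    rcases Finset.mem_insert.1 hj with rfl | hj'
    · exact (expOf_le_iff _ _).1 hler r (Finset.mem_singleton_self _)
    · exact (expOf_le_iff _ _).1 hle j hj'

-- ============ cast & block equiv ============
lemma sp_cast (𝕜 : Type) [Field 𝕜] {m n : ℕ} (h : m = n) (I : Ideal (MvPolynomial (Fin m) 𝕜))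
    (hI : IsSeriesParallel 𝕜 m I) :
    IsSeriesParallel 𝕜 n (Ideal.map (rename (R := 𝕜) ⇑(finCongr h)).toRingHom I) := by
  subst h
  have h2 : ⇑(finCongr (rfl : m = m)) = id := by
    funext x
    simp
  rw [h2, map_rename_id]
  exact hI

lemma exists_block_equiv {n a b : ℕ} (A : Finset (Fin n)) (ha : A.card = a)
    (hb : n = a + b) :
    ∃ e : Fin n ≃ Fin (a + b), ∀ x, x ∈ A ↔ ((e x : ℕ) < a) := by
  classical
  have hA : Fintype.card {x : Fin n // x ∈ A} = a := by rw [Fintype.card_coe]; exact ha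
  have hB : Fintype.card {x : Fin n // ¬ x ∈ A} = b := by
    rw [Fintype.card_subtype_compl, Fintype.card_fin]
    rw [hA]
    omega
  let eA := Fintype.equivFinOfCardEq hA
  let eB := Fintype.equivFinOfCardEq hB
  refine ⟨(Equiv.sumCompl (· ∈ A)).symm.trans ((eA.sumCongr eB).trans finSumFinEquiv), ?_⟩
  intro x
  by_cases h : x ∈ A
  · simp only [Equiv.trans_apply, Equiv.sumCompl_symm_apply_of_pos h,
      Equiv.sumCongr_apply, Sum.map_inl, finSumFinEquiv_apply_left, Fin.coe_castAdd]
    exact iff_of_true h (Fin.is_lt _)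
  · simp only [Equiv.trans_apply, Equiv.sumCompl_symm_apply_of_neg h,
      Equiv.sumCongr_apply, Sum.map_inr, finSumFinEquiv_apply_right, Fin.coe_natAdd]
    exact iff_of_false h (by omega)

lemma bp_symm_castAdd {a b : ℕ} (π1 : Equiv.Perm (Fin a)) (π2 : Equiv.Perm (Fin b)) (i : Fin a) :
    (finSumFinEquiv.symm.trans ((π1.sumCongr π2).trans finSumFinEquiv)).symm
      (Fin.castAdd b i) = Fin.castAdd b (π1.symm i) := by
  simp [Equiv.symm_trans_apply, finSumFinEquiv_symm_apply_castAdd, Equiv.sumCongr_symm]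

lemma bp_symm_natAdd {a b : ℕ} (π1 : Equiv.Perm (Fin a)) (π2 : Equiv.Perm (Fin b)) (j : Fin b) :
    (finSumFinEquiv.symm.trans ((π1.sumCongr π2).trans finSumFinEquiv)).symm
      (Fin.natAdd a j) = Fin.natAdd a (π2.symm j) := by
  simp [Equiv.symm_trans_apply, finSumFinEquiv_symm_apply_natAdd, Equiv.sumCongr_symm]


-- ============ main induction ============
lemma sp_main (𝕜 : Type) [Field 𝕜] : ∀ n : ℕ, 1 ≤ n → ∀ P : PartialOrder (Fin n),
    IsPForest P →
    (∀ p : Fin n, ¬ PIsMax P p → ∃ q q' : Fin n, q ≠ q' ∧ PChild P p q ∧ PChild P p q') →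
    ∃ π : Equiv.Perm (Fin n),
      IsSeriesParallel 𝕜 n (Ideal.map (rename (R := 𝕜) ⇑π).toRingHom (leafIdeal 𝕜 P)) := by
  intro n
  induction n using Nat.strong_induction_on with
  | _ n ih =>
    intro hn P hforest hchildren
    rcases eq_or_lt_of_le hn with h1 | h2
    · -- base case n = 1
      subst h1
      refine ⟨1, ?_⟩
      have hco : ⇑(1 : Equiv.Perm (Fin 1)) = id := rfl
      rw [hco, map_rename_id]
      have hgens : { f : MvPolynomial (Fin 1) 𝕜 | ∃ l : Fin 1, PIsMax P l ∧
          f = sfMon 𝕜 (Finset.univ.filter (fun j => P.le j l)) } = {X 0} := by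
        ext f
        constructor
        · rintro ⟨l, hl, rfl⟩
          have hfil : Finset.univ.filter (fun j => P.le j l) = {l} := by
            ext j
            simp only [Finset.mem_filter, Finset.mem_univ, true_and, Finset.mem_singleton]
            constructor
            · intro _
              exact Subsingleton.elim _ _
            · rintro rfl
              exact P.le_refl _
          rw [hfil]
          have : l = 0 := Subsingleton.elim _ _
          subst this
          simp [sfMon]
        · rintro rfl
          refine ⟨0, fun q _ => Subsingleton.elim _ _, ?_⟩
          have hfil : Finset.univ.filter (fun j => P.le j (0 : Fin 1)) = {(0 : Fin 1)} := by
            ext j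
            simp only [Finset.mem_filter, Finset.mem_univ, true_and, Finset.mem_singleton]
            constructor
            · intro _
              exact Subsingleton.elim _ _
            · rintro rfl
              exact P.le_refl _
          rw [hfil]
          simp [sfMon]
      rw [leafIdeal, hgens]
      exact IsSeriesParallel.basic
    · -- n ≥ 2
      obtain ⟨r, hrmin, -⟩ := exists_root_below P ⟨0, by omega⟩
      by_cases hall : ∀ x, P.le r x
      · -- cone case
        set b := n - 1 with hbdef
        have hb : 1 ≤ b := by omega
        have hab : n = 1 + b := by omega
        obtain ⟨e, he⟩ := exists_block_equiv ({r} : Finset (Fin n)) (Finset.card_singleton r) hab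
        set Q := pullback P ⇑e.symm e.symm.injective with hQdef
        have her : e.symm (Fin.castAdd b 0) = r := by
          have h0 : ((e (e.symm (Fin.castAdd b 0)) : Fin (1+b)) : ℕ) < 1 := by
            rw [Equiv.apply_symm_apply]
            simp
          have := (he (e.symm (Fin.castAdd b 0))).2 h0
          simpa using this
        have hroot : ∀ x, Q.le (Fin.castAdd b 0) x := by
          intro x
          show P.le (e.symm (Fin.castAdd b 0)) (e.symm x)
          rw [her]
          exact hall _
        have hQforest := pullback_forest P ⇑e.symm e.symm.injective hforest
        have hQchildren := pullback_children P ⇑e.symm e.symm.injective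
          (fun u v _ _ => ⟨e v, e.symm_apply_apply v⟩) hchildren
        set P2 := pullback Q (Fin.natAdd 1) natAdd_inj with hP2def
        have hrne : ∀ j : Fin b, Fin.natAdd 1 j ≠ Fin.castAdd b 0 := by
          intro j h
          have := congrArg Fin.val h
          simp [Fin.coe_natAdd] at this
        have hupR : ∀ u v, (∃ i, Fin.natAdd 1 i = u) → Q.le u v →
            ∃ j, Fin.natAdd 1 j = v := by
          intro u v hu huv
          rcases fin_add_cases v with ⟨i, rfl⟩ | ⟨j, rfl⟩
          · exfalso
            obtain ⟨i0, rfl⟩ := hu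
            have h1 : (i : Fin 1) = 0 := Subsingleton.elim _ _
            subst h1
            have h3 : Q.le (Fin.castAdd b 0) (Fin.natAdd 1 i0) := hroot _
            exact hrne i0 (Q.le_antisymm _ _ huv h3)
          · exact ⟨j, rfl⟩
        have hP2forest := pullback_forest Q (Fin.natAdd 1) natAdd_inj hQforest
        have hP2children := pullback_children Q (Fin.natAdd 1) natAdd_inj hupR hQchildren
        obtain ⟨π2, hsp2⟩ := ih b (by omega) hb P2 hP2forest hP2children
        set bp := finSumFinEquiv.symm.trans
          (((Equiv.refl (Fin 1)).sumCongr π2).trans finSumFinEquiv) with hbpdef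
        set Q' := pullback Q ⇑bp.symm bp.symm.injective with hQ'def
        have hroot' : ∀ x, Q'.le (Fin.castAdd b 0) x := by
          intro x
          show Q.le (bp.symm (Fin.castAdd b 0)) (bp.symm x)
          rw [bp_symm_castAdd]
          exact hroot _
        have hQ'2 : pullback Q' (Fin.natAdd 1) natAdd_inj =
            pullback P2 ⇑π2.symm π2.symm.injective := by
          apply PartialOrder.ext
          intro x y
          show Q.le (bp.symm (Fin.natAdd 1 x)) (bp.symm (Fin.natAdd 1 y)) ↔
            Q.le (Fin.natAdd 1 (π2.symm x)) (Fin.natAdd 1 (π2.symm y))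
          rw [bp_symm_natAdd, bp_symm_natAdd]
        have hstep := leafIdeal_block_cone 𝕜 hb Q' hroot'
        rw [hQ'2, ← leafIdeal_map_equiv 𝕜 π2 P2] at hstep
        have hsp : IsSeriesParallel 𝕜 (1+b) (leafIdeal 𝕜 Q') := by
          rw [hstep]
          exact IsSeriesParallel.inter IsSeriesParallel.basic hsp2
        have hQ'eq : leafIdeal 𝕜 Q' =
            Ideal.map (rename (R := 𝕜) ⇑(e.trans bp)).toRingHom (leafIdeal 𝕜 P) := by
          rw [leafIdeal_map_equiv 𝕜 (e.trans bp) P]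
          congr 1
        rw [hQ'eq] at hsp
        have hcast := sp_cast 𝕜 hab.symm _ hsp
        rw [map_rename_rename] at hcast
        refine ⟨(e.trans bp).trans (finCongr hab.symm), ?_⟩
        have hco : ⇑((e.trans bp).trans (finCongr hab.symm)) =
            ⇑(finCongr hab.symm) ∘ ⇑(e.trans bp) := Equiv.coe_trans _ _
        rw [hco]
        exact hcast
      · -- parallel case
        push_neg at hall
        obtain ⟨x1, hx1⟩ := hall
        set A := Finset.univ.filter (fun j => P.le r j) with hAdef
        have hrA : r ∈ A := Finset.mem_filter.2 ⟨Finset.mem_univ _, P.le_refl r⟩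
        have hx1A : x1 ∉ A := fun h => hx1 (Finset.mem_filter.1 h).2
        set a := A.card with hadef
        have haln : a ≤ n := by
          have := Finset.card_le_univ A
          simpa using this
        have ha : 1 ≤ a := Finset.card_pos.2 ⟨r, hrA⟩
        have haltn : a < n := by
          have hss : A ⊂ Finset.univ := ⟨Finset.subset_univ A, fun h => hx1A (h (Finset.mem_univ x1))⟩
          have := Finset.card_lt_card hss
          simpa using this
        set b := n - a with hbdef
        have hb : 1 ≤ b := by omega
        have hab : n = a + b := by omega
        obtain ⟨e, he⟩ := exists_block_equiv A rfl hab
        set Q := pullback P ⇑e.symm e.symm.injective with hQdef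
        have hup : ∀ u v, P.le u v → u ∈ A → v ∈ A := by
          intro u v huv hu
          exact Finset.mem_filter.2 ⟨Finset.mem_univ _,
            P.le_trans _ _ _ (Finset.mem_filter.1 hu).2 huv⟩
        have hdown : ∀ u v, P.le u v → v ∈ A → u ∈ A := by
          intro u v huv hv
          have hrv : P.le r v := (Finset.mem_filter.1 hv).2
          refine Finset.mem_filter.2 ⟨Finset.mem_univ _, ?_⟩
          obtain ⟨m, hmmin, hmu⟩ := exists_root_below P u
          have hmv : P.le m v := P.le_trans _ _ _ hmu huv
          rcases eq_or_ne m v with rfl | hmne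
          · have : u = m := P.le_antisymm _ _ huv hmu
            subst this
            exact hrv
          rcases eq_or_ne r v with rfl | hrne
          · have : u = r := hrmin u huv
            subst this
            exact P.le_refl _
          rcases hforest v m r (plt_of_le_ne P hmv hmne) (plt_of_le_ne P hrv hrne) with h' | h'
          · have : m = r := hrmin m h'
            subst this
            exact hmu
          · exact P.le_trans _ _ _ h' hmu
        have hsep : ∀ x y, Q.le x y → ((x : ℕ) < a ↔ (y : ℕ) < a) := by
          intro x y hxy
          have hxy' : P.le (e.symm x) (e.symm y) := hxy
          have hex : ∀ z : Fin (a+b), (e.symm z ∈ A ↔ ((z : ℕ) < a)) := by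
            intro z
            have := he (e.symm z)
            rwa [Equiv.apply_symm_apply] at this
          constructor
          · intro h
            exact (hex y).1 (hup _ _ hxy' ((hex x).2 h))
          · intro h
            exact (hex x).1 (hdown _ _ hxy' ((hex y).2 h))
        have hQforest := pullback_forest P ⇑e.symm e.symm.injective hforest
        have hQchildren := pullback_children P ⇑e.symm e.symm.injective
          (fun u v _ _ => ⟨e v, e.symm_apply_apply v⟩) hchildren
        set P1 := pullback Q (Fin.castAdd b) castAdd_inj with hP1def
        set P2 := pullback Q (Fin.natAdd a) natAdd_inj with hP2def
        have hupL : ∀ u v, (∃ i, Fin.castAdd b i = u) → Q.le u v →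
            ∃ j, Fin.castAdd b j = v := by
          intro u v hu huv
          exact (castAdd_range_iff v).2 ((hsep u v huv).1 ((castAdd_range_iff u).1 hu))
        have hupR : ∀ u v, (∃ i, Fin.natAdd a i = u) → Q.le u v →
            ∃ j, Fin.natAdd a j = v := by
          intro u v hu huv
          exact (natAdd_range_iff v).2 (fun h => (natAdd_range_iff u).1 hu ((hsep u v huv).2 h))
        have hP1forest := pullback_forest Q (Fin.castAdd b) castAdd_inj hQforest
        have hP1children := pullback_children Q (Fin.castAdd b) castAdd_inj hupL hQchildren
        have hP2forest := pullback_forest Q (Fin.natAdd a) natAdd_inj hQforest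
        have hP2children := pullback_children Q (Fin.natAdd a) natAdd_inj hupR hQchildren
        obtain ⟨π1, hsp1⟩ := ih a haltn ha P1 hP1forest hP1children
        obtain ⟨π2, hsp2⟩ := ih b (by omega) hb P2 hP2forest hP2children
        set bp := finSumFinEquiv.symm.trans ((π1.sumCongr π2).trans finSumFinEquiv) with hbpdef
        set Q' := pullback Q ⇑bp.symm bp.symm.injective with hQ'def
        have hbpblock : ∀ x : Fin (a+b), (((bp.symm x : Fin (a+b)) : ℕ) < a ↔ (x : ℕ) < a) := by
          intro x
          rcases fin_add_cases x with ⟨i, rfl⟩ | ⟨j, rfl⟩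
          · rw [bp_symm_castAdd]
            simp only [Fin.coe_castAdd]
            exact iff_of_true (Fin.is_lt _) (Fin.is_lt _)
          · rw [bp_symm_natAdd]
            simp only [Fin.coe_natAdd]
            omega
        have hsep' : ∀ x y, Q'.le x y → ((x : ℕ) < a ↔ (y : ℕ) < a) := by
          intro x y hxy
          have : Q.le (bp.symm x) (bp.symm y) := hxy
          rw [← hbpblock x, ← hbpblock y]
          exact hsep _ _ this
        have hQ'1 : pullback Q' (Fin.castAdd b) castAdd_inj =
            pullback P1 ⇑π1.symm π1.symm.injective := by
          apply PartialOrder.ext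
          intro x y
          show Q.le (bp.symm (Fin.castAdd b x)) (bp.symm (Fin.castAdd b y)) ↔
            Q.le (Fin.castAdd b (π1.symm x)) (Fin.castAdd b (π1.symm y))
          rw [bp_symm_castAdd, bp_symm_castAdd]
        have hQ'2 : pullback Q' (Fin.natAdd a) natAdd_inj =
            pullback P2 ⇑π2.symm π2.symm.injective := by
          apply PartialOrder.ext
          intro x y
          show Q.le (bp.symm (Fin.natAdd a x)) (bp.symm (Fin.natAdd a y)) ↔
            Q.le (Fin.natAdd a (π2.symm x)) (Fin.natAdd a (π2.symm y))
          rw [bp_symm_natAdd, bp_symm_natAdd]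
        have hstep := leafIdeal_block_sum 𝕜 Q' hsep'
        rw [hQ'1, hQ'2, ← leafIdeal_map_equiv 𝕜 π1 P1, ← leafIdeal_map_equiv 𝕜 π2 P2] at hstep
        have hsp : IsSeriesParallel 𝕜 (a+b) (leafIdeal 𝕜 Q') := by
          rw [hstep]
          exact IsSeriesParallel.sum hsp1 hsp2
        have hQ'eq : leafIdeal 𝕜 Q' =
            Ideal.map (rename (R := 𝕜) ⇑(e.trans bp)).toRingHom (leafIdeal 𝕜 P) := by
          rw [leafIdeal_map_equiv 𝕜 (e.trans bp) P]
          congr 1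
        rw [hQ'eq] at hsp
        have hcast := sp_cast 𝕜 hab.symm _ hsp
        rw [map_rename_rename] at hcast
        refine ⟨(e.trans bp).trans (finCongr hab.symm), ?_⟩
        have hco : ⇑((e.trans bp).trans (finCongr hab.symm)) =
            ⇑(finCongr hab.symm) ∘ ⇑(e.trans bp) := Equiv.coe_trans _ _
        rw [hco]
        exact hcast

end SPLayer

/-- Proposition 4.5: let `P` be a (nonempty) forest on `{1,…,n}` in which every non-maximal
element has at least two children. Then the leaf ideal `I_L(P)` is series-parallel up to
relabeling of the variables, and `C_i(I_L(P)) = { j : j ≤_P i }` for every `i`, so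
`i ↦ C_i(I_L(P))` is an isomorphism from `P` onto the support poset of `I_L(P)`
(ordered by inclusion); in particular there is a series-parallel ideal (up to relabeling)
whose support poset is isomorphic to `P`. -/
theorem stmt17 {𝕜 : Type} [Field 𝕜] (n : ℕ) (hn : 1 ≤ n) (P : PartialOrder (Fin n))
    (hforest : IsPForest P)
    (hchildren : ∀ p : Fin n, ¬ PIsMax P p →
      ∃ q q' : Fin n, q ≠ q' ∧ PChild P p q ∧ PChild P p q') :
    (∃ π : Equiv.Perm (Fin n),
      IsSeriesParallel 𝕜 n
        (Ideal.map (MvPolynomial.rename (π : Fin n → Fin n)).toRingHom (leafIdeal 𝕜 P))) ∧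
    (∀ i : Fin n, suppC (leafIdeal 𝕜 P) i = { j : Fin n | P.le j i }) ∧
    Function.Injective (fun i => suppC (leafIdeal 𝕜 P) i) ∧
    (∀ i i' : Fin n, suppC (leafIdeal 𝕜 P) i ⊆ suppC (leafIdeal 𝕜 P) i' ↔ P.le i i') := by
  constructor
  · exact sp_main 𝕜 n hn P hforest hchildren
  have hsupp : ∀ i, suppC (leafIdeal 𝕜 P) i = { j : Fin n | P.le j i } :=
    suppC_leafIdeal 𝕜 P hforest hchildren
  refine ⟨hsupp, ?_, ?_⟩
  · intro i i' h
    simp only [hsupp] at h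
    have h1 : P.le i i' := (Set.ext_iff.1 h i).1 (P.le_refl i)
    have h2 : P.le i' i := (Set.ext_iff.1 h i').2 (P.le_refl i')
    exact P.le_antisymm _ _ h1 h2
  · intro i i'
    rw [hsupp, hsupp]
    constructor
    · intro h
      exact h (P.le_refl i)
    · intro h j hj
      exact P.le_trans _ _ _ hj h
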